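/- arXiv:2410.03260 — 3 statements merged into one kernel-verified Lean document; each statement's English description precedes it below -/
import Mathlib

section
/- Let F : ℝ → ℝ be a lift of an orientation-preserving circle homeomorphism, and let (G_t)_{t∈[0,1]} be a continuous family of lifts of orientation-preserving circle homeomorphisms with G₀ = id_ℝ, G₁ = (x ↦ x + 1), and such that for every x ∈ ℝ the map t ↦ G_t(x) is nondecreasing. Then for every c ∈ [τ(F), τ(F) + 1] there exists t ∈ [0,1] with τ(G_t ∘ F) = c. In particular, the rotation numbers of the induced circle homeomorphisms of the G_t ∘ F, t ∈ [0,1], attain every value of ℝ/ℤ. -/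
open Set Filter

/-- A lift of an orientation-preserving circle homeomorphism: a continuous strictly increasing
surjection `F : ℝ → ℝ` with `F(x+1) = F(x)+1` for all `x`. -/
def IsCircleLift (F : ℝ → ℝ) : Prop :=
  Continuous F ∧ StrictMono F ∧ Function.Surjective F ∧ ∀ x : ℝ, F (x + 1) = F x + 1

/-- `τ` is the translation number of the lift `F`: `(Fⁿ(x) − x)/n → τ` for every `x`.
The rotation number of the induced circle homeomorphism is `τ` mod 1. -/
def HasTransNum (F : ℝ → ℝ) (τ : ℝ) : Prop :=
  ∀ x : ℝ, Tendsto (fun n : ℕ => (F^[n] x - x) / (n : ℝ)) atTop (nhds τ)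

/-- The translation number is continuous along a (jointly continuous in a weak sense)
family of `CircleDeg1Lift`s. -/
lemma translationNumber_continuous_of_iterates (H : ℝ → CircleDeg1Lift)
    (hIter : ∀ n : ℕ, Continuous fun t => (H t)^[n] (0 : ℝ)) :
    Continuous fun t => (H t).translationNumber := by
  rw [continuous_iff_continuousAt]
  intro t₀
  rw [ContinuousAt, tendsto_order]
  constructor
  · -- lower bound: a < τ (H t₀) → eventually a < τ (H t)
    intro a ha
    obtain ⟨r, har, hrτ⟩ := exists_rat_btwn ha
    have hden : (0 : ℝ) < (r.den : ℝ) := by exact_mod_cast r.pos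
    have hnum : ((r.num : ℝ)) < ((H t₀) ^ r.den).translationNumber := by
      rw [CircleDeg1Lift.translationNumber_pow]
      have : (r : ℝ) * r.den < (H t₀).translationNumber * r.den := by
        exact mul_lt_mul_of_pos_right hrτ hden
      rwa [Rat.cast_def, div_mul_cancel₀ _ hden.ne', mul_comm] at this
    have hpt : (0 : ℝ) + r.num < ((H t₀) ^ r.den) 0 :=
      CircleDeg1Lift.lt_map_of_int_lt_translationNumber _ hnum 0
    rw [CircleDeg1Lift.coe_pow] at hpt
    have hev : ∀ᶠ t in nhds t₀, (0 : ℝ) + r.num < (H t)^[r.den] 0 :=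
      ((hIter r.den).continuousAt (x := t₀)).eventually_const_lt hpt
    filter_upwards [hev] with t ht
    have hle : ((r.num : ℝ)) ≤ ((H t) ^ r.den).translationNumber := by
      refine CircleDeg1Lift.le_translationNumber_of_add_int_le _ (x := 0) ?_
      rw [CircleDeg1Lift.coe_pow]; exact ht.le
    rw [CircleDeg1Lift.translationNumber_pow] at hle
    have : (r : ℝ) ≤ (H t).translationNumber := by
      rw [Rat.cast_def, div_le_iff₀ hden]
      linarith [hle]
    exact lt_of_lt_of_le har this
  · -- upper bound
    intro b hb
    obtain ⟨r, hτr, hrb⟩ := exists_rat_btwn hb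
    have hden : (0 : ℝ) < (r.den : ℝ) := by exact_mod_cast r.pos
    have hnum : ((H t₀) ^ r.den).translationNumber < ((r.num : ℝ)) := by
      rw [CircleDeg1Lift.translationNumber_pow, mul_comm]
      have : (H t₀).translationNumber * r.den < (r : ℝ) * r.den :=
        mul_lt_mul_of_pos_right hτr hden
      rwa [Rat.cast_def, div_mul_cancel₀ _ hden.ne'] at this
    have hpt : ((H t₀) ^ r.den) 0 < (0 : ℝ) + r.num :=
      CircleDeg1Lift.map_lt_of_translationNumber_lt_int _ hnum 0
    rw [CircleDeg1Lift.coe_pow] at hpt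
    have hev : ∀ᶠ t in nhds t₀, (H t)^[r.den] 0 < (0 : ℝ) + r.num :=
      ((hIter r.den).continuousAt (x := t₀)).eventually_lt_const hpt
    filter_upwards [hev] with t ht
    have hle : ((H t) ^ r.den).translationNumber ≤ ((r.num : ℝ)) := by
      refine CircleDeg1Lift.translationNumber_le_of_le_add_int _ (x := 0) ?_
      rw [CircleDeg1Lift.coe_pow]; exact ht.le
    rw [CircleDeg1Lift.translationNumber_pow] at hle
    have : (H t).translationNumber ≤ (r : ℝ) := by
      rw [Rat.cast_def, le_div_iff₀ hden]
      linarith [hle]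
    exact lt_of_le_of_lt this hrb

/-- If `F` is a lift of an orientation-preserving circle homeomorphism and `(G_t)_{t∈[0,1]}`
is a continuous family of such lifts with `G₀ = id`, `G₁ = (x ↦ x+1)` and `t ↦ G_t(x)`
nondecreasing for every `x`, then every value `c ∈ [τ(F), τ(F)+1]` is the translation number
of some `G_t ∘ F`; in particular the rotation numbers of the induced circle homeomorphisms
attain every value of `ℝ/ℤ`. -/
theorem transNum_attains_every_value (F : ℝ → ℝ) (hF : IsCircleLift F)
    (G : ℝ → ℝ → ℝ)
    (hGcont : ContinuousOn (fun p : ℝ × ℝ => G p.1 p.2) (Icc 0 1 ×ˢ univ))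
    (hGlift : ∀ t ∈ Icc (0:ℝ) 1, IsCircleLift (G t))
    (hG0 : G 0 = id)
    (hG1 : ∀ x : ℝ, G 1 x = x + 1)
    (hGmono : ∀ x : ℝ, MonotoneOn (fun t => G t x) (Icc 0 1))
    (τF : ℝ) (hτF : HasTransNum F τF) :
    ∀ c : ℝ, τF ≤ c → c ≤ τF + 1 →
      ∃ t ∈ Icc (0:ℝ) 1, HasTransNum (fun x => G t (F x)) c := by
  intro c hc1 hc2
  -- clamp the parameter into [0,1]
  set pr : ℝ → ℝ := fun t => min 1 (max 0 t) with hpr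
  have hprmem : ∀ t, pr t ∈ Icc (0:ℝ) 1 := fun t =>
    ⟨le_min zero_le_one (le_max_left 0 t), min_le_left _ _⟩
  have hpr_id : ∀ t ∈ Icc (0:ℝ) 1, pr t = t := fun t ht => by
    simp only [hpr, max_eq_right ht.1, min_eq_right ht.2]
  have hGmem : ∀ t, IsCircleLift (G (pr t)) := fun t => hGlift _ (hprmem t)
  -- the family of lifts H t = G (pr t) ∘ F, as CircleDeg1Lift
  have hHmono : ∀ t, Monotone fun x => G (pr t) (F x) := fun t =>
    ((hGmem t).2.1.monotone).comp (hF.2.1.monotone)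
  have hHadd : ∀ t, ∀ x : ℝ, G (pr t) (F (x + 1)) = G (pr t) (F x) + 1 := fun t x => by
    rw [hF.2.2.2 x, (hGmem t).2.2.2]
  set H : ℝ → CircleDeg1Lift := fun t => ⟨⟨fun x => G (pr t) (F x), hHmono t⟩, hHadd t⟩
    with hH
  have hHapp : ∀ t x, H t x = G (pr t) (F x) := fun _ _ => rfl
  -- joint continuity
  have hprc : Continuous pr := (continuous_const.min (continuous_const.max continuous_id))
  have hGc : Continuous fun p : ℝ × ℝ => G (pr p.1) p.2 := by
    have hin : Continuous fun p : ℝ × ℝ => ((pr p.1, p.2) : ℝ × ℝ) :=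
      (hprc.comp continuous_fst).prodMk continuous_snd
    exact hGcont.comp_continuous hin fun p => ⟨hprmem p.1, mem_univ _⟩
  have hIter : ∀ n : ℕ, Continuous fun t => (H t)^[n] (0 : ℝ) := by
    intro n
    induction n with
    | zero => simpa using continuous_const
    | succ n ih =>
      have heq : ∀ t, (H t)^[n + 1] (0 : ℝ) = G (pr t) (F ((H t)^[n] 0)) := fun t => by
        rw [Function.iterate_succ_apply']; rfl
      simp only [heq]
      exact hGc.comp (continuous_id.prodMk (hF.1.comp ih))
  have hφc : Continuous fun t => (H t).translationNumber :=
    translationNumber_continuous_of_iterates H hIter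
  -- value at 0
  have hcoe0 : ⇑(H 0) = F := by
    funext x
    have : pr 0 = 0 := hpr_id 0 ⟨le_refl _, zero_le_one⟩
    rw [hHapp, this, hG0]; rfl
  have hφ0 : (H 0).translationNumber = τF := by
    refine (H 0).translationNumber_eq_of_tendsto₀ ?_
    have := hτF 0
    simp only [sub_zero] at this
    rw [hcoe0]
    exact this
  -- value at 1
  have hFlift : CircleDeg1Lift := ⟨⟨F, hF.2.1.monotone⟩, hF.2.2.2⟩
  have hφ1 : (H 1).translationNumber = τF + 1 := by
    set F' : CircleDeg1Lift := ⟨⟨F, hF.2.1.monotone⟩, hF.2.2.2⟩ with hF'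
    set T : CircleDeg1Lift := ↑(CircleDeg1Lift.translate (Multiplicative.ofAdd (1:ℝ))) with hT
    have hτF' : F'.translationNumber = τF := by
      refine F'.translationNumber_eq_of_tendsto₀ ?_
      have := hτF 0
      simp only [sub_zero] at this; exact this
    have hcomm : Commute T F' := by
      rw [CircleDeg1Lift.commute_iff_commute]
      intro x
      show T (F' x) = F' (T x)
      have h1 : T (F' x) = 1 + F x := CircleDeg1Lift.translate_apply 1 (F x)
      have h2 : F' (T x) = F (1 + x) := by
        have : T x = 1 + x := CircleDeg1Lift.translate_apply 1 x
        rw [this]; rfl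
      rw [h1, h2, add_comm 1 x, hF.2.2.2, add_comm]
    have hmul : H 1 = T * F' := by
      apply CircleDeg1Lift.ext
      intro x
      have h1 : pr 1 = 1 := hpr_id 1 ⟨zero_le_one, le_refl _⟩
      rw [hHapp, h1, hG1]
      show F x + 1 = T (F' x)
      rw [CircleDeg1Lift.translate_apply]
      show F x + 1 = 1 + F x
      ring
    rw [hmul, CircleDeg1Lift.translationNumber_mul_of_commute hcomm,
      CircleDeg1Lift.translationNumber_translate, hτF']
    ring
  -- intermediate value theorem
  have hmem : c ∈ Icc ((H 0).translationNumber) ((H 1).translationNumber) := by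
    rw [hφ0, hφ1]; exact ⟨hc1, hc2⟩
  obtain ⟨t, ht, hφt⟩ :=
    intermediate_value_Icc zero_le_one hφc.continuousOn hmem
  refine ⟨t, ht, ?_⟩
  have hcoet : ⇑(H t) = fun x => G t (F x) := by
    funext x
    rw [hHapp, hpr_id t ht]
  intro x
  have hφt' : (H t).translationNumber = c := hφt
  have h := (H t).tendsto_translationNumber x
  rw [hφt'] at h
  have : ∀ n : ℕ, ((H t) ^ n) x = (fun x => G t (F x))^[n] x := fun n => by
    rw [CircleDeg1Lift.coe_pow, hcoet]
  simpa only [this] using h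
end

section
/- Let F : ℝ → ℝ be a lift of an orientation-preserving circle homeomorphism whose induced circle homeomorphism f is minimal, and let (G_t)_{t∈[0,1]} be a continuous family of lifts of orientation-preserving circle homeomorphisms with G₀ = id_ℝ and such that for every x ∈ ℝ the map t ↦ G_t(x) is nondecreasing. Let ε ∈ (0,1] be such that τ(G_ε ∘ F) − τ(F) < 1 (so that the rotation numbers of the induced circle homeomorphisms of the G_t ∘ F, t ∈ [0,ε], do not attain every value of ℝ/ℤ) and such that G_ε(F(x₀)) ≠ F(x₀) for some x₀ ∈ ℝ. Then τ(G_ε ∘ F) ≠ τ(F). -/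
open Set Filter

/-- The circle homeomorphism induced by the lift `F` is minimal: for every `x ∈ ℝ` the full
orbit `{Fⁿ(x) + m : n, m ∈ ℤ}` is dense in `ℝ` (`y` belongs to this set iff `Fⁿ(x) + m = y`
for some `n ∈ ℕ, m ∈ ℤ`, or `Fⁿ(y) + m = x` for some `n ∈ ℕ, m ∈ ℤ`). -/
def IsMinimalLift (F : ℝ → ℝ) : Prop :=
  ∀ x : ℝ, Dense {y : ℝ | ∃ n : ℕ, ∃ m : ℤ, F^[n] x + (m : ℝ) = y ∨ F^[n] y + (m : ℝ) = x}


lemma step_hit_pos {θ r : ℝ} (hθ : 0 < θ) (hθr : θ < r) (c : ℝ) :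
    ∃ k : ℕ, k ≤ ⌈1/θ⌉₊ ∧ ∃ m : ℤ, |(k : ℝ) * θ + m - c| ≤ r := by
  set a := c - r with ha
  set u := Int.fract a with hu
  have hu0 : 0 ≤ u := Int.fract_nonneg a
  have hu1 : u ≤ 1 := (Int.fract_lt_one a).le
  refine ⟨⌈u/θ⌉₊, Nat.ceil_le_ceil (by gcongr), ⟨⌊a⌋, ?_⟩⟩
  have h1 : u ≤ (⌈u/θ⌉₊ : ℝ) * θ := by
    rw [← div_le_iff₀ hθ]; exact Nat.le_ceil _
  have h2 : (⌈u/θ⌉₊ : ℝ) * θ < u + θ := by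
    rw [← lt_div_iff₀ hθ, add_div]
    have := Nat.ceil_lt_add_one (by positivity : (0:ℝ) ≤ u/θ)
    calc (⌈u/θ⌉₊ : ℝ) < u/θ + 1 := this
    _ = u/θ + θ/θ := by rw [div_self hθ.ne']
  have hfr : u + ⌊a⌋ = a := by rw [hu, Int.fract, sub_add_cancel]
  rw [abs_le]
  constructor
  · nlinarith
  · nlinarith

lemma step_hit {θ r : ℝ} (hθ : θ ≠ 0) (hθr : |θ| < r) (c : ℝ) :
    ∃ k : ℕ, k ≤ ⌈1/|θ|⌉₊ ∧ ∃ m : ℤ, |(k : ℝ) * θ + m - c| ≤ r := by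
  rcases hθ.lt_or_gt with h | h
  · have habs : |θ| = -θ := abs_of_neg h
    obtain ⟨k, hk, m, hm⟩ := step_hit_pos (by linarith [abs_of_neg h] : (0:ℝ) < -θ)
      (by rw [← habs]; exact hθr) (-c)
    refine ⟨k, by rwa [habs], -m, ?_⟩
    rw [← abs_neg]; convert hm using 2; push_cast; ring
  · obtain ⟨k, hk, m, hm⟩ := step_hit_pos h (by rwa [abs_of_pos h] at hθr) c
    exact ⟨k, by rwa [abs_of_pos h], m, hm⟩

open CircleDeg1Lift in
/-- If `K` is a continuous lift dominating the translation by `t`, strictly at some point,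
and `ℤt + ℤ` is dense, then `τ(K) > t`. -/
lemma bump_lemma (K : CircleDeg1Lift) (hKc : Continuous ⇑K) {t : ℝ}
    (hK : ∀ y, y + t ≤ K y)
    (hdense : Dense {s : ℝ | ∃ n m : ℤ, (n : ℝ) * t + m = s})
    (y₀ : ℝ) (hy₀ : y₀ + t < K y₀) : t < CircleDeg1Lift.translationNumber K := by
  -- the bump: δ and r
  set ψ : ℝ → ℝ := fun y => K y - y - t with hψ
  have hψc : Continuous ψ := by fun_prop
  set δ : ℝ := ψ y₀ / 2 with hδ
  have hδ0 : 0 < δ := by simp only [hδ, hψ]; linarith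
  have hU : IsOpen (ψ ⁻¹' Ioi δ) := isOpen_Ioi.preimage hψc
  obtain ⟨r, hr0, hball⟩ := Metric.isOpen_iff.1 hU y₀ (by
    simp only [mem_preimage, mem_Ioi, hδ, hψ]; linarith)
  have hψper : ∀ y (m : ℤ), ψ (y + m) = ψ y := fun y m => by
    simp only [hψ, K.map_add_int]; ring
  -- bump fact
  have hbump : ∀ y, (∃ m : ℤ, |y + m - y₀| < r) → y + t + δ ≤ K y := by
    rintro y ⟨m, hm⟩
    have : ψ (y + m) > δ := hball (by simpa [Real.dist_eq] using hm)
    rw [hψper] at this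
    simp only [hψ] at this; linarith
  -- pick a small step θ = j₀ t + m₀' in the dense subgroup
  set r' : ℝ := min r (1/2) with hr'
  have hr'0 : 0 < r' := lt_min hr0 (by norm_num)
  obtain ⟨s, hsS, hs0, hsr⟩ : ∃ s ∈ {s : ℝ | ∃ n m : ℤ, (n : ℝ) * t + m = s},
      0 < s ∧ s < r'/2 := by
    obtain ⟨s, hs, h1, h2⟩ := hdense.exists_between (by linarith : (0:ℝ) < r'/2)
    exact ⟨s, hs, h1, h2⟩
  obtain ⟨n₀, m₀, hnm⟩ := hsS
  have hs1 : s < 1 := by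
    have : r' ≤ 1/2 := min_le_right _ _
    linarith
  have hn₀ : n₀ ≠ 0 := by
    rintro rfl
    simp only [Int.cast_zero, zero_mul, zero_add] at hnm
    have h1' : (0:ℝ) < (m₀ : ℝ) := by rw [hnm]; exact hs0
    have h2' : (m₀ : ℝ) < 1 := by rw [hnm]; exact hs1
    have : (1:ℤ) ≤ m₀ := by exact_mod_cast h1'
    have : (1:ℝ) ≤ (m₀:ℝ) := by exact_mod_cast this
    linarith
  obtain ⟨j₀, m₀', hj₀, hθeq⟩ : ∃ (j₀ : ℕ) (m₀' : ℤ), 1 ≤ j₀ ∧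
      ((j₀:ℝ) * t + m₀' = s ∨ (j₀:ℝ) * t + m₀' = -s) := by
    rcases hn₀.lt_or_gt with h | h
    · refine ⟨(-n₀).toNat, -m₀, by omega, Or.inr ?_⟩
      have : (((-n₀).toNat : ℤ) : ℝ) = -(n₀ : ℝ) := by
        rw [Int.toNat_of_nonneg (by omega)]; push_cast; ring
      push_cast at this ⊢
      rw [this]; linarith [hnm]
    · refine ⟨n₀.toNat, m₀, by omega, Or.inl ?_⟩
      have : ((n₀.toNat : ℤ) : ℝ) = (n₀ : ℝ) := by
        rw [Int.toNat_of_nonneg (by omega)]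
      push_cast at this ⊢
      rw [this]; exact hnm
  set θ : ℝ := (j₀ : ℝ) * t + m₀' with hθdef
  have hθabs : |θ| = s := by
    rcases hθeq with h | h
    · rw [h]; exact abs_of_pos hs0
    · rw [h, abs_neg]; exact abs_of_pos hs0
  have hθne : θ ≠ 0 := fun h => by rw [h, abs_zero] at hθabs; linarith
  have hθr : |θ| < r'/2 := by rw [hθabs]; exact hsr
  -- lower bound for iterates
  have f1 : ∀ (a : ℝ) (n : ℕ), a + n * t ≤ (K ^ n) a := by
    intro a n
    induction n with
    | zero => simp
    | succ n ih =>
      have : (K ^ (n+1)) a = K ((K ^ n) a) := by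
        rw [pow_succ']; rfl
      rw [this]
      calc a + (↑(n+1)) * t = (a + n * t) + t := by push_cast; ring
      _ ≤ (K ^ n) a + t := by linarith
      _ ≤ K ((K ^ n) a) := hK _
  set q : ℕ := ⌈1/|θ|⌉₊ * j₀ + 1 with hq
  have hq0 : 0 < q := Nat.succ_pos _
  -- main estimate
  have main : ∀ y : ℝ, y + ((q : ℝ) * t + δ) ≤ (K ^ q) y := by
    intro y
    obtain ⟨k, hk, m, hm⟩ := step_hit hθne hθr (y₀ - y)
    set j : ℕ := k * j₀ with hjdef
    have hjq : j + 1 ≤ q := by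
      have : j ≤ ⌈1/|θ|⌉₊ * j₀ := Nat.mul_le_mul_right _ hk
      omega
    have hbump' : (y + j * t) + t + δ ≤ K (y + j * t) := by
      apply hbump
      refine ⟨k * m₀' + m, ?_⟩
      have hexp : (y + (j:ℝ) * t) + ((k * m₀' + m : ℤ) : ℝ) - y₀
          = (k:ℝ) * θ + m - (y₀ - y) := by
        rw [hθdef, hjdef]; push_cast; ring
      rw [hexp]
      calc |(k:ℝ) * θ + m - (y₀ - y)| ≤ r'/2 := hm
      _ < r' := by linarith
      _ ≤ r := min_le_left _ _
    have hdecomp : (K ^ q) y = (K ^ (q - 1 - j)) ((K ^ (j+1)) y) := by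
      have : K ^ q = K ^ (q - 1 - j) * K ^ (j + 1) := by
        rw [← pow_add]; congr 1; omega
      rw [this]; rfl
    have h2 : K (y + j * t) ≤ (K ^ (j+1)) y := by
      have : (K ^ (j+1)) y = K ((K ^ j) y) := by rw [pow_succ']; rfl
      rw [this]
      exact K.mono (f1 y j)
    have h3 : ((K ^ (j+1)) y) + ((q - 1 - j : ℕ) : ℝ) * t ≤ (K ^ (q-1-j)) ((K ^ (j+1)) y) :=
      f1 _ _
    have hmono : (K ^ (q-1-j)) (K (y + j * t)) ≤ (K ^ (q-1-j)) ((K ^ (j+1)) y) :=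
      (K ^ (q-1-j)).mono h2
    have h4 : (K (y + j * t)) + ((q - 1 - j : ℕ) : ℝ) * t ≤ (K ^ (q-1-j)) (K (y + j * t)) :=
      f1 _ _
    have hcast : ((q - 1 - j : ℕ) : ℝ) = (q : ℝ) - 1 - j := by
      rw [Nat.cast_sub (by omega : j ≤ q - 1), Nat.cast_sub (by omega : 1 ≤ q)]
      norm_num
    rw [hdecomp]
    rw [hcast] at h4
    linarith
  -- conclude
  have h5 : (q : ℝ) * t + δ ≤ CircleDeg1Lift.translationNumber (K ^ q) :=
    CircleDeg1Lift.le_translationNumber_of_add_le _ main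
  rw [CircleDeg1Lift.translationNumber_pow] at h5
  have hqR : (0:ℝ) < q := by exact_mod_cast hq0
  nlinarith

open CircleDeg1Lift in
/-- A lift of a minimal circle homeomorphism has irrational translation number. -/
lemma irrational_of_minimal (F : CircleDeg1Lift) (hFc : Continuous ⇑F)
    (hFi : Function.Injective ⇑F)
    (hmin : ∀ x : ℝ,
      Dense {y : ℝ | ∃ n : ℕ, ∃ m : ℤ, (⇑F)^[n] x + (m : ℝ) = y ∨ (⇑F)^[n] y + (m : ℝ) = x}) :
    Irrational (CircleDeg1Lift.translationNumber F) := by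
  by_contra hirr
  rw [Irrational] at hirr
  push_neg at hirr
  obtain ⟨q, hq⟩ := not_not.mp (by simpa using hirr)
  set n : ℕ := q.den with hn
  set p : ℤ := q.num with hp
  have hn0 : 0 < n := q.pos
  have hτ : CircleDeg1Lift.translationNumber F = (p : ℝ) / (n : ℝ) := by
    rw [← hq, Rat.cast_def]
  obtain ⟨x₁, hx₁⟩ := (F.translationNumber_eq_rat_iff hFc hn0).mp hτ
  -- the (closed, countable) set containing the full orbit of x₁
  set D : Set ℝ := {y : ℝ | ∃ j : ℕ, j < n ∧ ∃ m : ℤ, y = (F ^ j) x₁ + m} with hD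
  have hDadd : ∀ y ∈ D, ∀ m : ℤ, y + (m : ℝ) ∈ D := by
    rintro y ⟨j, hj, m', rfl⟩ m
    exact ⟨j, hj, m' + m, by push_cast; ring⟩
  have hiter : ∀ k : ℕ, (F ^ (n * k)) x₁ = x₁ + (k : ℝ) * p := by
    intro k
    induction k with
    | zero => simp
    | succ k ih =>
      have : F ^ (n * (k + 1)) = F ^ (n * k) * F ^ n := by rw [← pow_add]; ring_nf
      rw [this, mul_apply, hx₁, CircleDeg1Lift.map_add_int, ih]
      push_cast; ring
  have hDit : ∀ k : ℕ, (F ^ k) x₁ ∈ D := by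
    intro k
    set a : ℕ := k / n with ha
    have hdm : n * a + k % n = k := Nat.div_add_mod k n
    have h1 : F ^ k = F ^ (k % n) * F ^ (n * a) := by rw [← pow_add]; congr 1; omega
    rw [h1, mul_apply, hiter]
    have h2 : x₁ + (a : ℝ) * (p : ℝ) = x₁ + (((a : ℤ) * p : ℤ) : ℝ) := by push_cast; ring
    rw [h2, CircleDeg1Lift.map_add_int]
    exact ⟨k % n, Nat.mod_lt _ hn0, (a : ℤ) * p, rfl⟩
  have hDmapn : ∀ y ∈ D, (F ^ n) y = y + (p : ℝ) := by
    rintro y ⟨j, hj, m, rfl⟩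
    have h1 : F ^ n * F ^ j = F ^ j * F ^ n := by rw [← pow_add, ← pow_add]; ring_nf
    rw [CircleDeg1Lift.map_add_int, ← mul_apply, h1, mul_apply, hx₁, CircleDeg1Lift.map_add_int]
    ring
  have hDmapnk : ∀ k : ℕ, ∀ y ∈ D, (F ^ (n * k)) y = y + (k : ℝ) * p := by
    intro k
    induction k with
    | zero => intro y _; simp
    | succ k ih =>
      intro y hy
      have : F ^ (n * (k + 1)) = F ^ n * F ^ (n * k) := by rw [← pow_add]; ring_nf
      rw [this, mul_apply, ih y hy]
      have : y + (k : ℝ) * p = y + ((k * p : ℤ) : ℝ) := by push_cast; ring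
      rw [this, CircleDeg1Lift.map_add_int, hDmapn y hy]
      push_cast; ring
  -- the orbit of x₁ lies in D
  have hSD : {y : ℝ | ∃ k : ℕ, ∃ m : ℤ, (⇑F)^[k] x₁ + (m : ℝ) = y ∨ (⇑F)^[k] y + (m : ℝ) = x₁}
      ⊆ D := by
    rintro y ⟨k, m, hy | hy⟩
    · rw [← hy, ← CircleDeg1Lift.coe_pow]
      exact hDadd _ (hDit k) m
    · -- backward orbit
      rw [← CircleDeg1Lift.coe_pow] at hy
      have hkle : k ≤ n * k + n := by nlinarith [hn0]
      set d : ℝ := (F ^ (n * k + n)) y with hd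
      have hdD : d ∈ D := by
        have : F ^ (n * k + n) = F ^ (n * k + n - k) * F ^ k := by rw [← pow_add]; congr 1; omega
        have hd' : d = (F ^ (n * k + n - k)) ((F ^ k) y) := by rw [hd, this, mul_apply]
        have hFky : (F ^ k) y = x₁ + (-m : ℤ) := by
          push_cast; linarith [hy]
        rw [hd', hFky, CircleDeg1Lift.map_add_int]
        exact hDadd _ (hDit _) _
      set e : ℤ := ((k : ℤ) + 1) * p with he
      have hmem : d - (e : ℝ) ∈ D := by
        have h := hDadd d hdD (-e)
        have heq : d + ((-e : ℤ) : ℝ) = d - (e : ℝ) := by push_cast; ring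
        rwa [heq] at h
      have hd2 : (F ^ (n * (k + 1))) (d - (e : ℝ)) = d := by
        rw [hDmapnk (k+1) _ hmem]
        push_cast [he]; ring
      have hd3 : (F ^ (n * (k + 1))) y = d := by
        have hnn : n * (k + 1) = n * k + n := by ring
        rw [hd, hnn]
      have hinj : Function.Injective ⇑(F ^ (n * (k+1))) := by
        rw [CircleDeg1Lift.coe_pow]; exact hFi.iterate _
      have hyd : y = d - (e : ℝ) := hinj (by rw [hd3, hd2])
      rw [hyd]
      exact hmem
  -- D is closed
  have hDclosed : IsClosed D := by
    have : D = ⋃ j ∈ Finset.range n,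
        (fun y : ℝ => y - (F ^ j) x₁) ⁻¹' (Set.range ((↑) : ℤ → ℝ)) := by
      ext y
      simp only [hD, mem_setOf_eq, mem_iUnion, Finset.mem_range, mem_preimage, Set.mem_range]
      constructor
      · rintro ⟨j, hj, m, rfl⟩; exact ⟨j, hj, m, by ring⟩
      · rintro ⟨j, hj, m, hm⟩; exact ⟨j, hj, m, by linarith⟩
    rw [this]
    refine Set.Finite.isClosed_biUnion (Finset.range n).finite_toSet fun j _ => ?_
    exact IsClosed.preimage (continuous_id.sub continuous_const)
      Int.isClosedEmbedding_coe_real.isClosed_range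
  -- D is countable
  have hDcount : D.Countable := by
    apply Set.Countable.mono _ (Set.countable_range fun pr : ℕ × ℤ => (F ^ pr.1) x₁ + (pr.2 : ℝ))
    rintro y ⟨j, _, m, rfl⟩
    exact ⟨(j, m), rfl⟩
  -- contradiction with density
  have hdense : Dense D := (hmin x₁).mono hSD
  have : D = Set.univ := hDclosed.closure_eq ▸ hdense.closure_eq
  rw [this] at hDcount
  exact Cardinal.not_countable_real hDcount

/-- If the circle homeomorphism induced by `F` is minimal, `(G_t)_{t∈[0,1]}` is a continuous
family of lifts with `G₀ = id` and `t ↦ G_t(x)` nondecreasing for every `x`, and if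
`ε ∈ (0,1]` is such that `τ(G_ε ∘ F) − τ(F) < 1` (so the rotation numbers of the
`G_t ∘ F`, `t ∈ [0,ε]`, do not attain every value of `ℝ/ℤ`) and `G_ε(F(x₀)) ≠ F(x₀)` for
some `x₀`, then `τ(G_ε ∘ F) ≠ τ(F)`. -/
theorem transNum_strictly_moves (F : ℝ → ℝ) (hF : IsCircleLift F) (hmin : IsMinimalLift F)
    (G : ℝ → ℝ → ℝ)
    (hGcont : ContinuousOn (fun p : ℝ × ℝ => G p.1 p.2) (Icc 0 1 ×ˢ univ))
    (hGlift : ∀ t ∈ Icc (0:ℝ) 1, IsCircleLift (G t))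
    (hG0 : G 0 = id)
    (hGmono : ∀ x : ℝ, MonotoneOn (fun t => G t x) (Icc 0 1))
    (ε : ℝ) (hε : ε ∈ Ioc (0:ℝ) 1)
    (τF τε : ℝ) (hτF : HasTransNum F τF)
    (hτε : HasTransNum (fun x => G ε (F x)) τε)
    (hlt : τε - τF < 1)
    (hmove : ∃ x₀ : ℝ, G ε (F x₀) ≠ F x₀) :
    τε ≠ τF := by
  intro heq
  obtain ⟨hFcont, hFsm, hFsurj, hFper⟩ := hF
  have hεI : ε ∈ Icc (0:ℝ) 1 := ⟨hε.1.le, hε.2⟩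
  obtain ⟨hGc, hGsm, hGs, hGp⟩ := hGlift ε hεI
  set Fc : CircleDeg1Lift := ⟨⟨F, hFsm.monotone⟩, hFper⟩ with hFcdef
  set Gc : CircleDeg1Lift := ⟨⟨G ε, hGsm.monotone⟩, hGp⟩ with hGcdef
  set Hc : CircleDeg1Lift := Gc * Fc with hHcdef
  have hFcoe : ⇑Fc = F := rfl
  have hHcoe : ⇑Hc = fun x => G ε (F x) := rfl
  have hτFc : CircleDeg1Lift.translationNumber Fc = τF := by
    apply CircleDeg1Lift.translationNumber_eq_of_tendsto₀
    have h := hτF 0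
    simp only [sub_zero] at h
    exact h
  have hτHc : CircleDeg1Lift.translationNumber Hc = τε := by
    apply CircleDeg1Lift.translationNumber_eq_of_tendsto₀
    have h := hτε 0
    simp only [sub_zero] at h
    exact h
  -- basic order facts
  have hGε_ge : ∀ y : ℝ, y ≤ G ε y := by
    intro y
    have h := hGmono y (left_mem_Icc.mpr zero_le_one) hεI hε.1.le
    simpa [hG0] using h
  have hHF : ∀ x, F x ≤ Hc x := fun x => hGε_ge (F x)
  obtain ⟨x₀, hx₀⟩ := hmove
  have hx₀lt : F x₀ < Hc x₀ := (hGε_ge (F x₀)).lt_of_ne (Ne.symm hx₀)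
  -- bijectivity
  have hFbij : Function.Bijective F := ⟨hFsm.injective, hFsurj⟩
  have hFcbij : Function.Bijective ⇑Fc := hFbij
  have hirr : Irrational τF := by
    rw [← hτFc]
    exact irrational_of_minimal Fc hFcont hFsm.injective hmin
  -- arithmetic consequence of irrationality
  have hratc : ∀ (k : ℕ) (m : ℤ), (k : ℝ) * τF + m = 0 → k = 0 ∧ m = 0 := by
    intro k m hkm
    rcases Nat.eq_zero_or_pos k with hk | hk
    · subst hk
      simp only [Nat.cast_zero, zero_mul, zero_add] at hkm
      exact ⟨rfl, by exact_mod_cast hkm⟩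
    · exfalso
      apply hirr
      refine ⟨(-m : ℚ) / (k : ℚ), ?_⟩
      have hk0 : ((k : ℝ)) ≠ 0 := by positivity
      push_cast
      field_simp
      linarith
  -- dense subgroup ℤτF + ℤ
  have hdense : Dense {s : ℝ | ∃ n m : ℤ, (n : ℝ) * τF + m = s} := by
    set Sg : AddSubgroup ℝ :=
      { carrier := {s : ℝ | ∃ n m : ℤ, (n : ℝ) * τF + m = s}
        zero_mem' := ⟨0, 0, by simp⟩
        add_mem' := by
          rintro a b ⟨n₁, m₁, rfl⟩ ⟨n₂, m₂, rfl⟩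
          exact ⟨n₁ + n₂, m₁ + m₂, by push_cast; ring⟩
        neg_mem' := by
          rintro a ⟨n₁, m₁, rfl⟩
          exact ⟨-n₁, -m₁, by push_cast; ring⟩ } with hSg
    have h1 : (1 : ℝ) ∈ AddSubgroup.closure ({1, τF} : Set ℝ) :=
      AddSubgroup.subset_closure (by simp)
    have h2 : τF ∈ AddSubgroup.closure ({1, τF} : Set ℝ) :=
      AddSubgroup.subset_closure (by simp)
    rcases AddSubgroup.dense_or_cyclic (AddSubgroup.closure ({1, τF} : Set ℝ)) with hd | ⟨a, ha⟩
    · apply hd.mono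
      have hle : AddSubgroup.closure ({1, τF} : Set ℝ) ≤ Sg := by
        rw [AddSubgroup.closure_le]
        rintro x (rfl | rfl)
        · exact ⟨0, 1, by simp⟩
        · exact ⟨1, 0, by simp⟩
      exact hle
    · exfalso
      rw [ha] at h1 h2
      rw [AddSubgroup.mem_closure_singleton] at h1 h2
      obtain ⟨k, hk⟩ := h1
      obtain ⟨l, hl⟩ := h2
      rw [zsmul_eq_mul] at hk hl
      have hk0 : (k : ℝ) ≠ 0 := by
        intro h; rw [h, zero_mul] at hk; exact one_ne_zero hk.symm
      apply hirr
      refine ⟨(l : ℚ) / (k : ℚ), ?_⟩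
      push_cast
      rw [div_eq_iff hk0]
      have hcalc : (l : ℝ) * ((k : ℝ) * a) = ((l : ℝ) * a) * (k : ℝ) := by ring
      rw [hk, hl] at hcalc
      linarith [hcalc]
  -- semiconjugacy of F with the translation by τF
  obtain ⟨Φ, hΦ⟩ := CircleDeg1Lift.semiconj_of_isUnit_of_translationNumber_eq
    (CircleDeg1Lift.isUnit_iff_bijective.2 hFcbij)
    (CircleDeg1Lift.translate (Multiplicative.ofAdd τF)).isUnit
    (by rw [hτFc, CircleDeg1Lift.translationNumber_translate])
  have hΦ' : ∀ x, Φ (F x) = τF + Φ x := by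
    intro x
    have h := hΦ x
    simp [CircleDeg1Lift.translate_apply] at h
    exact h
  have hΦiter : ∀ (k : ℕ) (x : ℝ), Φ (F^[k] x) = (k : ℝ) * τF + Φ x := by
    intro k
    induction k with
    | zero => intro x; simp
    | succ k ih =>
      intro x
      rw [Function.iterate_succ_apply', hΦ', ih]
      push_cast; ring
  -- Φ is injective
  have hΦaux : ∀ u v : ℝ, u < v → Φ u = Φ v → False := by
    intro u v huv hΦuv
    obtain ⟨y, hyS, hy1, hy2⟩ := (hmin u).exists_between huv
    have hΦy : Φ y = Φ u :=
      le_antisymm (hΦuv ▸ Φ.mono hy2.le) (Φ.mono hy1.le)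
    obtain ⟨k, m, hcase | hcase⟩ := hyS
    · have : Φ y = (k : ℝ) * τF + Φ u + m := by
        rw [← hcase, CircleDeg1Lift.map_add_int, hΦiter]
      have hzero : (k : ℝ) * τF + m = 0 := by rw [hΦy] at this; linarith
      obtain ⟨hk0, hm0⟩ := hratc k m hzero
      subst hk0; subst hm0
      simp only [Function.iterate_zero, id_eq, Int.cast_zero, add_zero] at hcase
      exact absurd hcase.symm hy1.ne'
    · have h1 : Φ (F^[k] y + (m : ℝ)) = Φ u := by rw [hcase]
      rw [CircleDeg1Lift.map_add_int, hΦiter, hΦy] at h1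
      have hzero : (k : ℝ) * τF + m = 0 := by linarith
      obtain ⟨hk0, hm0⟩ := hratc k m hzero
      subst hk0; subst hm0
      simp only [Function.iterate_zero, id_eq, Int.cast_zero, add_zero] at hcase
      rw [hcase] at hy1
      exact lt_irrefl _ hy1
  have hΦinj : Function.Injective ⇑Φ := by
    intro u v huv
    by_contra hne
    rcases Ne.lt_or_gt hne with h | h
    · exact hΦaux u v h huv
    · exact hΦaux v u h huv.symm
  have hΦsm : StrictMono ⇑Φ := Φ.monotone.strictMono_of_injective hΦinj
  -- Φ has dense range
  have hkey : ∀ (n m : ℤ), Φ 0 + ((n : ℝ) * τF + m) ∈ Set.range ⇑Φ := by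
    intro n m
    rcases le_or_gt 0 n with hn | hn
    · refine ⟨F^[n.toNat] 0 + m, ?_⟩
      rw [CircleDeg1Lift.map_add_int, hΦiter]
      have : ((n.toNat : ℕ) : ℝ) = (n : ℝ) := by
        exact_mod_cast congrArg (Int.cast : ℤ → ℝ) (Int.toNat_of_nonneg hn)
      rw [this]; ring
    · set k : ℕ := (-n).toNat with hkd
      have hkn : ((k : ℕ) : ℝ) = -(n : ℝ) := by
        exact_mod_cast congrArg (Int.cast : ℤ → ℝ) (Int.toNat_of_nonneg (by omega : 0 ≤ -n))
      obtain ⟨x, hx⟩ := hFsurj.iterate k 0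
      refine ⟨x + m, ?_⟩
      rw [CircleDeg1Lift.map_add_int]
      have h0 : Φ (F^[k] x) = (k : ℝ) * τF + Φ x := hΦiter k x
      rw [hx] at h0
      rw [hkn] at h0
      have : Φ x = Φ 0 + (n : ℝ) * τF := by linarith
      rw [this]; ring
  have hrange : DenseRange ⇑Φ := by
    have hd2 : Dense ((fun s => Φ 0 + s) '' {s : ℝ | ∃ n m : ℤ, (n : ℝ) * τF + m = s}) := by
      have hsur : Function.Surjective (fun s : ℝ => Φ 0 + s) := fun z => ⟨z - Φ 0, by ring⟩
      exact hsur.denseRange.dense_image (by fun_prop) hdense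
    apply hd2.mono
    rintro z ⟨s, ⟨n, m, rfl⟩, rfl⟩
    exact hkey n m
  have hΦcont : Continuous ⇑Φ := Φ.monotone.continuous_of_denseRange hrange
  have hΦsurj : Function.Surjective ⇑Φ := Φ.continuous_iff_surjective.1 hΦcont
  have hΦbij : Function.Bijective ⇑Φ := ⟨hΦinj, hΦsurj⟩
  -- conjugate Hc by Φ
  set Φu : CircleDeg1Liftˣ := (CircleDeg1Lift.isUnit_iff_bijective.2 hΦbij).unit with hΦud
  have hΦucoe : (↑Φu : CircleDeg1Lift) = Φ := IsUnit.unit_spec _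
  set K : CircleDeg1Lift := ↑Φu * Hc * ↑Φu⁻¹ with hKd
  have hτK : K.translationNumber = τF := by
    rw [hKd, CircleDeg1Lift.translationNumber_conj_eq, hτHc, heq]
  have hKapp : ∀ y, K y = Φ (Hc ((↑Φu⁻¹ : CircleDeg1Lift) y)) := by
    intro y
    rw [hKd, CircleDeg1Lift.mul_apply, CircleDeg1Lift.mul_apply, hΦucoe]
  have hinvp : ∀ y, Φ ((↑Φu⁻¹ : CircleDeg1Lift) y) = y := by
    intro y
    have h := CircleDeg1Lift.units_apply_inv_apply Φu y
    rwa [show ∀ z, Φu z = Φ z from fun z => by rw [← hΦucoe]] at h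
  have hKge : ∀ y, y + τF ≤ K y := by
    intro y
    set x := (↑Φu⁻¹ : CircleDeg1Lift) y with hx
    have h2 : Φ (F x) ≤ Φ (Hc x) := Φ.mono (hHF x)
    rw [hΦ' x, hinvp y] at h2
    rw [hKapp y, ← hx]
    linarith
  have hKstrict : Φ x₀ + τF < K (Φ x₀) := by
    have hxinv : (↑Φu⁻¹ : CircleDeg1Lift) (Φ x₀) = x₀ := by
      have h := CircleDeg1Lift.units_inv_apply_apply Φu x₀
      rwa [show Φu x₀ = Φ x₀ from by rw [← hΦucoe]] at h
    rw [hKapp, hxinv]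
    have h2 : Φ (F x₀) < Φ (Hc x₀) := hΦsm hx₀lt
    rw [hΦ' x₀] at h2
    linarith
  -- continuity of K
  have hinvsurj : Function.Surjective ⇑(↑Φu⁻¹ : CircleDeg1Lift) := by
    intro y
    refine ⟨Φ y, ?_⟩
    have h := CircleDeg1Lift.units_inv_apply_apply Φu y
    rwa [show Φu y = Φ y from by rw [← hΦucoe]] at h
  have hinvcont : Continuous ⇑(↑Φu⁻¹ : CircleDeg1Lift) :=
    (↑Φu⁻¹ : CircleDeg1Lift).continuous_iff_surjective.2 hinvsurj
  have hHccont : Continuous ⇑Hc := hGc.comp hFcont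
  have hKcont : Continuous ⇑K := by
    have : ⇑K = fun y => Φ (Hc ((↑Φu⁻¹ : CircleDeg1Lift) y)) := funext hKapp
    rw [this]
    exact hΦcont.comp (hHccont.comp hinvcont)
  -- the bump lemma gives the contradiction
  have hfinal := bump_lemma K hKcont hKge hdense (Φ x₀) hKstrict
  rw [hτK] at hfinal
  exact lt_irrefl _ hfinal
end

section
/- Let F : ℝ → ℝ be a lift of an orientation-preserving circle homeomorphism whose induced circle homeomorphism is minimal, and let (G_t)_{t∈[0,1]} be a continuous family of lifts of orientation-preserving circle homeomorphisms with G₀ = id_ℝ and such that for every x ∈ ℝ the map t ↦ G_t(x) is strictly increasing. Then for every ε ∈ (0,1] there exists η > 0 such that: for all coprime integers p, q with q ≥ 1 and τ(F) ≤ p/q ≤ τ(F) + η, and for every x ∈ ℝ, there exists t ∈ [0,ε] with (G_t ∘ F)^q(x) = x + p. In particular τ(G_t ∘ F) = p/q, and the orbit of x mod 1 under the circle homeomorphism induced by G_t ∘ F is periodic of minimal period q (hence of cyclic order p/q). -/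
open Set Filter

namespace RealizeAux

open CircleDeg1Lift Topology

local notation "τ" => CircleDeg1Lift.translationNumber

lemma zpow_apply_add (fu : CircleDeg1Liftˣ) (a b : ℤ) (x : ℝ) :
    (fu^(a+b)) x = (fu^a) ((fu^b) x) := by
  rw [zpow_add]; rfl

lemma zpow_natCast_apply (fu : CircleDeg1Liftˣ) (n : ℕ) (x : ℝ) :
    (fu^(n:ℤ)) x = (⇑(fu : CircleDeg1Lift))^[n] x := by
  rw [zpow_natCast]
  have : ((fu^n : CircleDeg1Liftˣ) : CircleDeg1Lift) = (fu : CircleDeg1Lift)^n := by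
    exact_mod_cast rfl
  show ((fu^n : CircleDeg1Liftˣ) : CircleDeg1Lift) x = _
  rw [this, coe_pow]

lemma apply_le_apply_iff (g : CircleDeg1Liftˣ) {a b : ℝ} : g a ≤ g b ↔ a ≤ b := by
  rw [show (⇑(g : CircleDeg1Lift) : ℝ → ℝ) = ⇑(toOrderIso g) from (coe_toOrderIso g).symm]
  exact (toOrderIso g).le_iff_le

lemma zpow_zero_apply (fu : CircleDeg1Liftˣ) (x : ℝ) : (fu^(0:ℤ)) x = x := by
  show ((fu^(0:ℤ) : CircleDeg1Liftˣ) : CircleDeg1Lift) x = x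
  norm_num

lemma zpow_fixed (u : CircleDeg1Liftˣ) (x : ℝ) (p : ℤ)
    (h : u x = x + p) : ∀ a : ℤ, (u^a) x = x + (a:ℝ) * p := by
  have hnat : ∀ a : ℕ, (u^(a:ℤ)) x = x + (a:ℝ) * p := by
    intro a
    rw [zpow_natCast_apply]
    have := (u : CircleDeg1Lift).iterate_eq_of_map_eq_add_int (x := x) (m := p) h a
    simpa using this
  intro a
  rcases le_or_gt 0 a with ha | ha
  · lift a to ℕ using ha
    exact hnat a
  · set b : ℕ := (-a).toNat with hb
    have hab : (b:ℤ) = -a := Int.toNat_of_nonneg (by omega)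
    have hinj : Function.Injective ⇑((u^(b:ℤ) : CircleDeg1Liftˣ) : CircleDeg1Lift) := by
      have : Function.Bijective ⇑((u^(b:ℤ) : CircleDeg1Liftˣ) : CircleDeg1Lift) :=
        isUnit_iff_bijective.1 ⟨u^(b:ℤ), rfl⟩
      exact this.injective
    apply hinj
    have h1 : (u^(b:ℤ)) ((u^a) x) = x := by
      rw [← zpow_apply_add, hab, neg_add_cancel]
      simp
    have h2 : (u^(b:ℤ)) (x + (a:ℝ)*p) = x := by
      have : (a:ℝ) * p = ((a*p : ℤ) : ℝ) := by push_cast; ring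
      rw [this, CircleDeg1Lift.map_add_int, hnat b]
      have hbr : ((b:ℕ):ℝ) = -(a:ℝ) := by exact_mod_cast hab
      rw [hbr]; push_cast; ring
    rw [h1, h2]

lemma no_periodic (fu : CircleDeg1Liftˣ)
    (hmin : ∀ x : ℝ, Dense {y : ℝ | ∃ n : ℕ, ∃ m : ℤ,
      (⇑(fu:CircleDeg1Lift))^[n] x + (m:ℝ) = y ∨ (⇑(fu:CircleDeg1Lift))^[n] y + (m:ℝ) = x})
    (q : ℕ) (hq : 0 < q) (p : ℤ) (x : ℝ) :
    (⇑(fu:CircleDeg1Lift))^[q] x ≠ x + p := by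
  intro h
  set v : ℤ → ℝ := fun n => (fu^n) x with hv
  have hu : (fu^(q:ℤ)) x = x + p := by rw [zpow_natCast_apply]; exact h
  have hqz : (0:ℤ) < q := by exact_mod_cast hq
  have key : ∀ n : ℤ, ∃ r : ℕ, r < q ∧ ∃ m : ℤ, v n = v r + m := by
    intro n
    refine ⟨(n % q).toNat, ?_, (n / q) * p, ?_⟩
    · have h1 : n % q < q := Int.emod_lt_of_pos n hqz
      omega
    · have h2 : ((n % (q:ℤ)).toNat : ℤ) = n % q := Int.toNat_of_nonneg (Int.emod_nonneg n (by omega))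
      have hdec : n = n % q + (q:ℤ) * (n / q) := (Int.emod_add_mul_ediv n q).symm
      have hfix : (fu^((q:ℤ) * (n / q))) x = x + ((n / q : ℤ):ℝ) * p := by
        rw [zpow_mul]
        exact zpow_fixed (fu^(q:ℤ)) x p hu (n / q)
      have : v n = (fu^(n % (q:ℤ))) ((fu^((q:ℤ) * (n / (q:ℤ)))) x) := by
        rw [hv, ← zpow_apply_add, ← hdec]
      rw [this, hfix]
      have hcast : ((n / q : ℤ):ℝ) * p = (((n / q * p : ℤ)):ℝ) := by push_cast; ring
      rw [hcast, CircleDeg1Lift.map_add_int]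
      show _ = (fu^(((n % (q:ℤ)).toNat : ℤ))) x + _
      rw [h2]
  set C : Set ℝ := ⋃ r ∈ Finset.range q, Set.range (fun m : ℤ => v r + (m:ℝ)) with hC
  have hSC : {y : ℝ | ∃ n : ℕ, ∃ m : ℤ,
      (⇑(fu:CircleDeg1Lift))^[n] x + (m:ℝ) = y ∨ (⇑(fu:CircleDeg1Lift))^[n] y + (m:ℝ) = x} ⊆ C := by
    rintro y ⟨n, m, hy | hy⟩
    · obtain ⟨r, hr, m', hm'⟩ := key n
      have : y = v r + ((m' + m : ℤ):ℝ) := by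
        rw [← hy, ← zpow_natCast_apply]
        show v (n:ℤ) + (m:ℝ) = _
        rw [hm']; push_cast; ring
      exact Set.mem_biUnion (Finset.mem_range.2 hr) ⟨m' + m, this.symm⟩
    · obtain ⟨r, hr, m', hm'⟩ := key (-(n:ℤ))
      have hyv : y = v (-(n:ℤ)) + ((-m : ℤ):ℝ) := by
        have h1 : (fu^((n:ℤ))) y = x - m := by
          rw [zpow_natCast_apply]; linarith [hy]
        have h2 : (fu^(-(n:ℤ))) ((fu^((n:ℤ))) y) = y := by
          rw [← zpow_apply_add, neg_add_cancel]
          exact zpow_zero_apply fu y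
        rw [h1] at h2
        rw [← h2]
        show (fu^(-(n:ℤ))) (x - (m:ℝ)) = _
        rw [CircleDeg1Lift.map_sub_int]
        push_cast; ring
      have : y = v r + ((m' + -m : ℤ):ℝ) := by rw [hyv, hm']; push_cast; ring
      exact Set.mem_biUnion (Finset.mem_range.2 hr) ⟨m' + -m, this.symm⟩
  have hclosed : IsClosed C := by
    apply (Finset.range q).finite_toSet.isClosed_biUnion
    intro r _
    have himg : (Set.range fun m : ℤ => v r + (m:ℝ)) =
        (fun z : ℝ => v r + z) '' Set.range ((↑) : ℤ → ℝ) := by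
      rw [← Set.range_comp]; rfl
    rw [himg]
    exact (Homeomorph.addLeft (v r)).isClosedMap _
      Int.isClosedEmbedding_coe_real.isClosed_range
  have hdense : Dense C := (hmin x).mono hSC
  have huniv : C = Set.univ := by
    rw [← hclosed.closure_eq]; exact hdense.closure_eq
  have hcount : C.Countable := by
    apply Set.Countable.biUnion ((Finset.range q).countable_toSet)
    intro r _
    exact Set.countable_range _
  rw [huniv] at hcount
  exact Cardinal.not_countable_real hcount

section ctx
variable (fu : CircleDeg1Liftˣ) (τ0 : ℝ)

lemma nmul_le_of_le (hτ : τ (fu : CircleDeg1Lift) = τ0) {n m : ℤ} {z : ℝ}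
    (h : (fu^n) z ≤ z + (m:ℝ)) : (n:ℝ)*τ0 ≤ m := by
  have := translationNumber_le_of_le_add_int ((fu^n : CircleDeg1Liftˣ) : CircleDeg1Lift)
    (x := z) (m := m) h
  rwa [translationNumber_zpow, hτ] at this

lemma le_nmul_of_ge (hτ : τ (fu : CircleDeg1Lift) = τ0) {n m : ℤ} {z : ℝ}
    (h : z + (m:ℝ) ≤ (fu^n) z) : (m:ℝ) ≤ (n:ℝ)*τ0 := by
  have := le_translationNumber_of_add_int_le ((fu^n : CircleDeg1Liftˣ) : CircleDeg1Lift)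
    (x := z) (m := m) h
  rwa [translationNumber_zpow, hτ] at this

lemma comp_le (hτ : τ (fu : CircleDeg1Lift) = τ0) {n m k l : ℤ}
    (h : (fu^n) 0 + (m:ℝ) ≤ (fu^k) 0 + (l:ℝ)) :
    (n:ℝ)*τ0 + m ≤ (k:ℝ)*τ0 + l := by
  have h2 : (fu^(-n)) ((fu^n) 0 + (m:ℝ)) ≤ (fu^(-n)) ((fu^k) 0 + (l:ℝ)) :=
    (apply_le_apply_iff (fu^(-n))).2 h
  rw [CircleDeg1Lift.map_add_int, CircleDeg1Lift.map_add_int, ← zpow_apply_add,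
    ← zpow_apply_add, neg_add_cancel, zpow_zero_apply] at h2
  have h3 : (0:ℝ) + ((m - l : ℤ):ℝ) ≤ (fu^(-n+k)) 0 := by push_cast; linarith
  have := le_nmul_of_ge fu τ0 hτ h3
  push_cast at this ⊢
  linarith

lemma comp_lt (hτ : τ (fu : CircleDeg1Lift) = τ0)
    (hirr : ∀ n m : ℤ, n ≠ 0 → (n:ℝ)*τ0 + m ≠ 0) {n m k l : ℤ}
    (h : (fu^n) 0 + (m:ℝ) < (fu^k) 0 + (l:ℝ)) :
    (n:ℝ)*τ0 + m < (k:ℝ)*τ0 + l := by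
  rcases eq_or_ne n k with rfl | hnk
  · have : (m:ℝ) < l := by linarith
    linarith
  · have hle := comp_le fu τ0 hτ h.le
    rcases hle.lt_or_eq with h' | h'
    · exact h'
    · exfalso
      have : ((k - n : ℤ):ℝ)*τ0 + ((l - m : ℤ):ℝ) = 0 := by push_cast; linarith
      exact hirr (k - n) (l - m) (by omega) this

/-- The set used to define the Poincaré semiconjugacy at basepoint `0`. -/
def pset (y : ℝ) : Set ℝ := {s | ∃ n m : ℤ, s = (n:ℝ)*τ0 + m ∧ (fu^n) 0 + (m:ℝ) ≤ y}

/-- The Poincaré semiconjugacy. -/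
noncomputable def hfun (y : ℝ) : ℝ := sSup (pset fu τ0 y)

lemma pset_nonempty (y : ℝ) : (pset fu τ0 y).Nonempty :=
  ⟨((0:ℤ):ℝ)*τ0 + ⌊y⌋, 0, ⌊y⌋, rfl, by rw [zpow_zero_apply]; simpa using Int.floor_le y⟩

lemma pset_bddAbove (hτ : τ (fu : CircleDeg1Lift) = τ0) (y : ℝ) :
    BddAbove (pset fu τ0 y) := by
  refine ⟨y + 1, ?_⟩
  rintro s ⟨n, m, rfl, hle⟩
  have h1 : (n:ℝ)*τ0 ≤ ⌈(fu^n) 0 - 0⌉ := by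
    have := translationNumber_le_ceil_sub ((fu^n : CircleDeg1Liftˣ) : CircleDeg1Lift) 0
    rwa [translationNumber_zpow, hτ] at this
  have h2 : (⌈(fu^n) 0 - 0⌉ : ℝ) < (fu^n) 0 - 0 + 1 := Int.ceil_lt_add_one _
  simp only [sub_zero] at h1 h2
  linarith

lemma mem_pset_le (hτ : τ (fu : CircleDeg1Lift) = τ0) {s : ℝ} {y : ℝ}
    (hs : s ∈ pset fu τ0 y) {k l : ℤ}
    (hy : y ≤ (fu^k) 0 + (l:ℝ)) : s ≤ (k:ℝ)*τ0 + l := by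
  obtain ⟨n, m, rfl, hle⟩ := hs
  exact comp_le fu τ0 hτ (hle.trans hy)

lemma mem_pset_lt (hτ : τ (fu : CircleDeg1Lift) = τ0)
    (hirr : ∀ n m : ℤ, n ≠ 0 → (n:ℝ)*τ0 + m ≠ 0) {s : ℝ} {y : ℝ}
    (hs : s ∈ pset fu τ0 y) {k l : ℤ}
    (hy : y < (fu^k) 0 + (l:ℝ)) : s < (k:ℝ)*τ0 + l := by
  obtain ⟨n, m, rfl, hle⟩ := hs
  exact comp_lt fu τ0 hτ hirr (hle.trans_lt hy)

lemma hfun_mono (hτ : τ (fu : CircleDeg1Lift) = τ0) : Monotone (hfun fu τ0) := by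
  intro y y' hyy
  refine csSup_le_csSup (pset_bddAbove fu τ0 hτ y') (pset_nonempty fu τ0 y) ?_
  rintro s ⟨n, m, rfl, hle⟩
  exact ⟨n, m, rfl, hle.trans hyy⟩

lemma hfun_add_one (hτ : τ (fu : CircleDeg1Lift) = τ0) (y : ℝ) :
    hfun fu τ0 (y + 1) = hfun fu τ0 y + 1 := by
  refine le_antisymm (csSup_le (pset_nonempty fu τ0 _) ?_) ?_
  · rintro s ⟨n, m, rfl, hle⟩
    have hmem : ((n:ℝ)*τ0 + ((m - 1 : ℤ):ℝ)) ∈ pset fu τ0 y := by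
      refine ⟨n, m - 1, rfl, ?_⟩
      push_cast
      linarith
    have h2 := le_csSup (pset_bddAbove fu τ0 hτ y) hmem
    have h3 : sSup (pset fu τ0 y) = hfun fu τ0 y := rfl
    rw [h3] at h2
    push_cast at h2
    linarith
  · have key : ∀ s ∈ pset fu τ0 y, s + 1 ≤ hfun fu τ0 (y + 1) := by
      rintro s ⟨n, m, rfl, hle⟩
      have hmem : ((n:ℝ)*τ0 + ((m + 1 : ℤ):ℝ)) ∈ pset fu τ0 (y + 1) := by
        refine ⟨n, m + 1, rfl, ?_⟩
        push_cast
        linarith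
      have h2 := le_csSup (pset_bddAbove fu τ0 hτ (y + 1)) hmem
      have h3 : sSup (pset fu τ0 (y + 1)) = hfun fu τ0 (y + 1) := rfl
      rw [h3] at h2
      push_cast at h2
      linarith
    have : hfun fu τ0 y ≤ hfun fu τ0 (y + 1) - 1 := by
      refine csSup_le (pset_nonempty fu τ0 y) ?_
      intro s hs
      linarith [key s hs]
    linarith

lemma hfun_map (hτ : τ (fu : CircleDeg1Lift) = τ0) (y : ℝ) :
    hfun fu τ0 (fu y) = hfun fu τ0 y + τ0 := by
  have equiv : ∀ n m : ℤ, ((fu^n) 0 + (m:ℝ) ≤ fu y ↔ (fu^(n-1)) 0 + (m:ℝ) ≤ y) := by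
    intro n m
    have happ : (fu : CircleDeg1Lift) ((fu^(n-1)) 0 + (m:ℝ)) = (fu^n) 0 + (m:ℝ) := by
      rw [CircleDeg1Lift.map_add_int]
      congr 1
      have h1 := zpow_apply_add fu 1 (n-1) 0
      rw [show (1:ℤ) + (n-1) = n by ring, zpow_one] at h1
      exact h1.symm
    constructor
    · intro h
      have := (apply_le_apply_iff fu (a := (fu^(n-1)) 0 + (m:ℝ)) (b := y))
      rw [← this, happ]
      exact h
    · intro h
      rw [← happ]
      exact (apply_le_apply_iff fu).2 h
  refine le_antisymm (csSup_le (pset_nonempty fu τ0 _) ?_) ?_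
  · rintro s ⟨n, m, rfl, hle⟩
    have hmem : (((n - 1 : ℤ):ℝ)*τ0 + (m:ℝ)) ∈ pset fu τ0 y :=
      ⟨n - 1, m, rfl, (equiv n m).1 hle⟩
    have h2 := le_csSup (pset_bddAbove fu τ0 hτ y) hmem
    have h3 : sSup (pset fu τ0 y) = hfun fu τ0 y := rfl
    rw [h3] at h2
    push_cast at h2
    nlinarith [h2]
  · have key : ∀ s ∈ pset fu τ0 y, s + τ0 ≤ hfun fu τ0 (fu y) := by
      rintro s ⟨n, m, rfl, hle⟩
      have hmem : (((n + 1 : ℤ):ℝ)*τ0 + (m:ℝ)) ∈ pset fu τ0 (fu y) := by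
        refine ⟨n + 1, m, rfl, ?_⟩
        have := (equiv (n + 1) m)
        rw [show n + 1 - 1 = n by ring] at this
        exact this.2 hle
      have h2 := le_csSup (pset_bddAbove fu τ0 hτ (fu y)) hmem
      have h3 : sSup (pset fu τ0 (fu y)) = hfun fu τ0 (fu y) := rfl
      rw [h3] at h2
      push_cast at h2
      nlinarith [h2]
    have : hfun fu τ0 y ≤ hfun fu τ0 (fu y) - τ0 := by
      refine csSup_le (pset_nonempty fu τ0 y) ?_
      intro s hs
      linarith [key s hs]
    linarith

lemma hfun_strict (hτ : τ (fu : CircleDeg1Lift) = τ0)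
    (hirr : ∀ n m : ℤ, n ≠ 0 → (n:ℝ)*τ0 + m ≠ 0)
    (hdense : ∀ a b : ℝ, a < b → ∃ n m : ℤ, (fu^n) 0 + (m:ℝ) ∈ Ioo a b)
    {y y' : ℝ} (h : y < y') : hfun fu τ0 y < hfun fu τ0 y' := by
  obtain ⟨k, l, hk⟩ := hdense y y' h
  obtain ⟨k', l', hk'⟩ := hdense y ((fu^k) 0 + l) hk.1
  have h1 : hfun fu τ0 y ≤ (k':ℝ)*τ0 + l' := by
    refine csSup_le (pset_nonempty fu τ0 y) ?_
    intro s hs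
    exact (mem_pset_lt fu τ0 hτ hirr hs hk'.1).le
  have h2 : (k':ℝ)*τ0 + l' < (k:ℝ)*τ0 + l :=
    comp_lt fu τ0 hτ hirr hk'.2
  have h3 : (k:ℝ)*τ0 + l ≤ hfun fu τ0 y' :=
    le_csSup (pset_bddAbove fu τ0 hτ y') ⟨k, l, rfl, hk.2.le⟩
  linarith

lemma tau_gt (hτ : τ (fu : CircleDeg1Lift) = τ0)
    (hirr : ∀ n m : ℤ, n ≠ 0 → (n:ℝ)*τ0 + m ≠ 0)
    (hdense : ∀ a b : ℝ, a < b → ∃ n m : ℤ, (fu^n) 0 + (m:ℝ) ∈ Ioo a b)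
    (K : CircleDeg1Lift) (δ : ℝ) (hδ : 0 < δ)
    (hK : ∀ z : ℝ, (fu : CircleDeg1Lift) z + δ ≤ K z) :
    ∃ c > 0, τ0 + c ≤ τ K := by
  set hl : CircleDeg1Lift := ⟨⟨hfun fu τ0, hfun_mono fu τ0 hτ⟩, hfun_add_one fu τ0 hτ⟩ with hhl
  have hlcoe : ∀ y : ℝ, hl y = hfun fu τ0 y := fun y => rfl
  set M := ⌈2/δ⌉₊ with hM
  have hne : (Finset.range (M+1)).Nonempty := ⟨0, Finset.mem_range.2 (Nat.succ_pos M)⟩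
  set g : ℕ → ℝ := fun i => hl ((i:ℝ)*(δ/2)) with hg
  set c := (Finset.range (M+1)).inf' hne (fun i => g (i+2) - g (i+1)) with hc
  have hcpos : 0 < c := by
    rw [hc, Finset.lt_inf'_iff]
    intro i _
    have : ((i:ℝ)+1)*(δ/2) < ((i:ℝ)+2)*(δ/2) := by nlinarith
    have := hfun_strict fu τ0 hτ hirr hdense this
    simp only [hg, hlcoe]
    push_cast
    linarith [this]
  have claim1 : ∀ z : ℝ, hl z + c ≤ hl (z + δ) := by
    intro z
    obtain ⟨k, w, hw0, hw1, rfl⟩ : ∃ (k:ℤ) (w:ℝ), 0 ≤ w ∧ w < 1 ∧ z = w + k :=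
      ⟨⌊z⌋, Int.fract z, Int.fract_nonneg z, Int.fract_lt_one z, by rw [Int.fract]; ring⟩
    have e1 : hl (w + (k:ℝ)) = hl w + (k : ℝ) := hl.map_add_int w k
    have e2 : hl (w + (k:ℝ) + δ) = hl (w + δ) + (k : ℝ) := by
      rw [show w + (k:ℝ) + δ = (w + δ) + (k:ℝ) by ring, hl.map_add_int]
    rw [e1, e2]
    have hδ2 : (0:ℝ) < δ/2 := by linarith
    set i := ⌊w/(δ/2)⌋₊ with hi
    have hi1 : (i:ℝ) ≤ w/(δ/2) := Nat.floor_le (by positivity)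
    have hi2 : w/(δ/2) < (i:ℝ)+1 := Nat.lt_floor_add_one _
    have hiw : (i:ℝ)*(δ/2) ≤ w := (le_div_iff₀ hδ2).1 hi1
    have hwi : w ≤ ((i:ℝ)+1)*(δ/2) := ((div_lt_iff₀ hδ2).1 hi2).le
    have hiM : i ∈ Finset.range (M+1) := by
      rw [Finset.mem_range, Nat.lt_succ_iff]
      have h2 : (i:ℝ) ≤ 2/δ := by
        rw [le_div_iff₀ hδ]
        nlinarith [hiw, hw1]
      have h3 : (2:ℝ)/δ ≤ M := by rw [hM]; exact Nat.le_ceil _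
      exact_mod_cast Nat.cast_le.1 (by linarith : (i:ℝ) ≤ (M:ℝ))
    have hle1 : hl w ≤ g (i+1) := by
      apply hl.mono
      push_cast
      linarith
    have hle2 : g (i+2) ≤ hl (w + δ) := by
      apply hl.mono
      push_cast
      nlinarith
    have hle3 : c ≤ g (i+2) - g (i+1) := by
      rw [hc]
      exact Finset.inf'_le _ hiM
    linarith
  have claim2 : ∀ n : ℕ, hl 0 + (n:ℝ)*(τ0 + c) ≤ hl (K^[n] 0) := by
    intro n
    induction n with
    | zero => simp
    | succ n ih =>
      rw [Function.iterate_succ_apply']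
      set u := K^[n] 0 with hu
      have s1 : hl ((fu : CircleDeg1Lift) u + δ) ≤ hl (K u) := hl.mono (hK u)
      have s2 : hl ((fu : CircleDeg1Lift) u) + c ≤ hl ((fu : CircleDeg1Lift) u + δ) := claim1 _
      have s3 : hl ((fu : CircleDeg1Lift) u) = hl u + τ0 := hfun_map fu τ0 hτ u
      push_cast
      nlinarith [s1, s2, s3, ih]
  have claim3 : ∀ n : ℕ, (n:ℝ)*(τ0+c) - 1 ≤ K^[n] 0 := by
    intro n
    have h1 := claim2 n
    have h2 : hl (K^[n] 0) ≤ hl 0 + ⌈K^[n] 0⌉ := hl.map_le_of_map_zero _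
    have h3 : (⌈K^[n] 0⌉ : ℝ) < K^[n] 0 + 1 := Int.ceil_lt_add_one _
    linarith
  have hA : Tendsto (fun n : ℕ => ((K^n : CircleDeg1Lift) 0 - 0)/(n:ℝ)) atTop (𝓝 (τ K)) :=
    K.tendsto_translationNumber 0
  have hB : Tendsto (fun n : ℕ => (τ0 + c) - 1/(n:ℝ)) atTop (𝓝 (τ0 + c)) := by
    have h1 := tendsto_one_div_atTop_nhds_zero_nat (𝕜 := ℝ)
    have h2 := tendsto_const_nhds (x := τ0 + c) (f := atTop (α := ℕ)).sub h1
    simpa using h2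
  refine ⟨c, hcpos, ?_⟩
  refine le_of_tendsto_of_tendsto hB hA ?_
  filter_upwards [eventually_ge_atTop 1] with n hn
  have hnpos : (0:ℝ) < n := by exact_mod_cast hn
  have h1 := claim3 n
  rw [coe_pow, sub_zero, le_div_iff₀ hnpos]
  have expand : (τ0 + c - 1/(n:ℝ))*(n:ℝ) = (n:ℝ)*(τ0+c) - 1 := by
    field_simp
  linarith

end ctx

lemma iter_cont (F : ℝ → ℝ) (hFc : Continuous F) (G : ℝ → ℝ → ℝ)
    (hGcont : ContinuousOn (fun p : ℝ × ℝ => G p.1 p.2) (Icc 0 1 ×ˢ univ))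
    (ε : ℝ) (hε : ε ≤ 1) (x : ℝ) (k : ℕ) :
    ContinuousOn (fun t => (fun z => G t (F z))^[k] x) (Icc 0 ε) := by
  induction k with
  | zero => simpa using continuousOn_const
  | succ k ih =>
    have heq : (fun t => (fun z => G t (F z))^[k+1] x)
        = fun t => G t (F ((fun z => G t (F z))^[k] x)) := by
      funext t; rw [Function.iterate_succ_apply']
    rw [heq]
    have hmap : MapsTo (fun t => (t, F ((fun z => G t (F z))^[k] x)))
        (Icc (0:ℝ) ε) (Icc (0:ℝ) 1 ×ˢ univ) :=
      fun t ht => ⟨⟨ht.1, ht.2.trans hε⟩, mem_univ _⟩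
    exact hGcont.comp (continuousOn_id.prodMk (hFc.comp_continuousOn ih)) hmap


end RealizeAux


open RealizeAux CircleDeg1Lift Topology

local notation "τ" => CircleDeg1Lift.translationNumber

/-- If the circle homeomorphism induced by `F` is minimal and `(G_t)_{t∈[0,1]}` is a
continuous family of lifts with `G₀ = id` and `t ↦ G_t(x)` strictly increasing for every
`x`, then for every `ε ∈ (0,1]` there is `η > 0` such that: for all coprime `p, q` with
`q ≥ 1` and `τ(F) ≤ p/q ≤ τ(F) + η` and every `x ∈ ℝ`, there exists `t ∈ [0,ε]` with
`(G_t ∘ F)^q(x) = x + p`; in particular `τ(G_t ∘ F) = p/q` and the orbit of `x mod 1` under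
the induced circle homeomorphism is periodic of minimal period `q` (hence of cyclic order
`p/q`). -/
theorem realization_of_nearby_rational_rotation_numbers
    (F : ℝ → ℝ) (hF : IsCircleLift F) (hmin : IsMinimalLift F)
    (G : ℝ → ℝ → ℝ)
    (hGcont : ContinuousOn (fun p : ℝ × ℝ => G p.1 p.2) (Icc 0 1 ×ˢ univ))
    (hGlift : ∀ t ∈ Icc (0:ℝ) 1, IsCircleLift (G t))
    (hG0 : G 0 = id)
    (hGstrict : ∀ x : ℝ, StrictMonoOn (fun t => G t x) (Icc 0 1))
    (τF : ℝ) (hτF : HasTransNum F τF) :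
    ∀ ε ∈ Ioc (0:ℝ) 1, ∃ η > (0:ℝ),
      ∀ p : ℤ, ∀ q : ℕ, 1 ≤ q → Int.gcd p (q : ℤ) = 1 →
        τF ≤ (p : ℝ) / (q : ℝ) → (p : ℝ) / (q : ℝ) ≤ τF + η →
        ∀ x : ℝ, ∃ t ∈ Icc (0:ℝ) ε,
          (fun z => G t (F z))^[q] x = x + (p : ℝ) ∧
          HasTransNum (fun z => G t (F z)) ((p : ℝ) / (q : ℝ)) ∧
          ∀ k : ℕ, 0 < k → k < q → ∀ m : ℤ, (fun z => G t (F z))^[k] x ≠ x + (m : ℝ) := by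
  classical
  obtain ⟨hFc, hFm, hFs, hFp⟩ := hF
  set f : CircleDeg1Lift := ⟨⟨F, hFm.monotone⟩, hFp⟩ with hfdef
  have hfcoe : ⇑f = F := rfl
  have hfbij : Function.Bijective F := ⟨hFm.injective, hFs⟩
  obtain ⟨fu, hfu⟩ : IsUnit f := isUnit_iff_bijective.2 hfbij
  have hcoe : ⇑(fu : CircleDeg1Lift) = F := by rw [hfu]; exact hfcoe
  have hτf : τ f = τF := by
    have h1 := f.tendsto_translationNumber 0
    have h1' : Tendsto (fun n : ℕ => (F^[n] 0 - 0)/(n:ℝ)) atTop (𝓝 (τ f)) := by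
      simpa only [CircleDeg1Lift.coe_pow, hfcoe] using h1
    exact tendsto_nhds_unique h1' (hτF 0)
  have hminfu : ∀ x : ℝ, Dense {y : ℝ | ∃ n : ℕ, ∃ m : ℤ,
      (⇑(fu:CircleDeg1Lift))^[n] x + (m:ℝ) = y ∨ (⇑(fu:CircleDeg1Lift))^[n] y + (m:ℝ) = x} := by
    rw [hcoe]; exact hmin
  have hτfu : τ (fu : CircleDeg1Lift) = τF := by rw [hfu]; exact hτf
  have noper : ∀ (q : ℕ), 0 < q → ∀ (p : ℤ) (x : ℝ), F^[q] x ≠ x + p := by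
    intro q hq p x
    have := no_periodic fu hminfu q hq p x
    rwa [hcoe] at this
  have hirr : ∀ n m : ℤ, n ≠ 0 → (n:ℝ)*τF + m ≠ 0 := by
    have key : ∀ (n' : ℕ), 0 < n' → ∀ m' : ℤ, ((n':ℝ)*τF + m' ≠ 0) := by
      intro n' hn' m' h0'
      have hq0 : ((n':ℕ):ℝ) ≠ 0 := by positivity
      have hrat : τ f = ((-m' : ℤ):ℝ)/((n' : ℕ):ℝ) := by
        rw [hτf]
        push_cast
        field_simp
        linarith
      rw [f.translationNumber_eq_rat_iff hFc hn'] at hrat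
      obtain ⟨x, hx⟩ := hrat
      rw [coe_pow, hfcoe] at hx
      exact noper n' hn' (-m') x hx
    intro n m hn h0
    rcases lt_trichotomy n 0 with hneg | rfl | hpos
    · have hcast : (((-n).toNat : ℕ):ℝ) = -(n:ℝ) := by
        have : ((-n).toNat : ℤ) = -n := Int.toNat_of_nonneg (by omega)
        exact_mod_cast this
      refine key (-n).toNat (by omega) (-m) ?_
      rw [hcast]; push_cast; linarith
    · exact hn rfl
    · have hcast : ((n.toNat : ℕ):ℝ) = (n:ℝ) := by
        have : (n.toNat : ℤ) = n := Int.toNat_of_nonneg (by omega)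
        exact_mod_cast this
      refine key n.toNat (by omega) m ?_
      rw [hcast]; exact h0
  have hdense : ∀ a b : ℝ, a < b → ∃ n m : ℤ, (fu^n) 0 + (m:ℝ) ∈ Ioo a b := by
    intro a b hab
    obtain ⟨y, hyS, hyI⟩ := (hmin 0).exists_between hab
    obtain ⟨n, m, hy | hy⟩ := hyS
    · refine ⟨(n:ℤ), m, ?_⟩
      rw [zpow_natCast_apply, hcoe, hy]
      exact hyI
    · refine ⟨-(n:ℤ), -m, ?_⟩
      have h1 : (fu^((n:ℤ))) y = 0 - (m:ℝ) := by
        rw [zpow_natCast_apply, hcoe]; linarith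
      have h2 : (fu^(-(n:ℤ))) ((fu^((n:ℤ))) y) = y := by
        rw [← zpow_apply_add, neg_add_cancel]; exact zpow_zero_apply fu y
      rw [h1] at h2
      have h3 : (fu^(-(n:ℤ))) ((0:ℝ) - (m:ℝ)) = (fu^(-(n:ℤ))) 0 - (m:ℝ) :=
        CircleDeg1Lift.map_sub_int _ 0 m
      rw [h3] at h2
      have : (fu^(-(n:ℤ))) 0 + ((-m : ℤ):ℝ) = y := by rw [← h2]; push_cast; ring
      rw [this]
      exact hyI
  intro ε hε
  obtain ⟨hε0, hε1⟩ := hε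
  have hGε := hGlift ε ⟨hε0.le, hε1⟩
  set gε : CircleDeg1Lift := ⟨⟨G ε, hGε.2.1.monotone⟩, hGε.2.2.2⟩ with hgεdef
  obtain ⟨y₀, hy₀mem, hy₀min⟩ := isCompact_Icc.exists_isMinOn (s := Icc (0:ℝ) 1)
    (nonempty_Icc.2 zero_le_one) ((hGε.1.sub continuous_id).continuousOn)
  set δ := G ε y₀ - y₀ with hδdef
  have hδpos : 0 < δ := by
    have h1 : G 0 y₀ < G ε y₀ := hGstrict y₀ ⟨le_rfl, zero_le_one⟩ ⟨hε0.le, hε1⟩ hε0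
    rw [hG0] at h1
    simp only [id_eq] at h1
    simp only [hδdef]
    linarith
  have hδall : ∀ z : ℝ, z + δ ≤ G ε z := by
    intro z
    have := gε.forall_map_sub_of_Icc (fun a => δ ≤ a) (fun w hw => hy₀min hw) z
    have h2 : gε z = G ε z := rfl
    rw [h2] at this
    linarith
  set K : CircleDeg1Lift := gε * f with hKdef
  have hKcoe : ∀ z, K z = G ε (F z) := fun z => rfl
  obtain ⟨c, hcpos, hcτ⟩ := tau_gt fu τF hτfu hirr hdense K δ hδpos (by
    intro z
    have h1 := hδall (F z)
    have h2 : (fu : CircleDeg1Lift) z = F z := congrFun hcoe z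
    rw [hKcoe z, h2]
    exact h1)
  set Q := max 1 ⌈2/c⌉₊ with hQdef
  have hQne : (Finset.Icc 1 Q).Nonempty := ⟨1, Finset.mem_Icc.2 ⟨le_rfl, le_max_left _ _⟩⟩
  set e : ℕ → ℝ := fun q => ((⌈(q:ℝ)*τF⌉ : ℝ) - (q:ℝ)*τF)/(q:ℝ) with hedef
  set η := min (c/2) ((Finset.Icc 1 Q).inf' hQne e / 2) with hηdef
  have hepos : ∀ q ∈ Finset.Icc 1 Q, 0 < e q := by
    intro q hqm
    obtain ⟨hq1, -⟩ := Finset.mem_Icc.1 hqm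
    have hqpos : (0:ℝ) < q := by exact_mod_cast hq1
    have hne2 : (q:ℝ)*τF ≠ (⌈(q:ℝ)*τF⌉ : ℝ) := by
      intro hcontra
      refine hirr q (-⌈(q:ℝ)*τF⌉) (by exact_mod_cast (by omega : ¬ (q:ℤ) = 0)) ?_
      push_cast
      linarith
    have hlt2 : (q:ℝ)*τF < ⌈(q:ℝ)*τF⌉ := lt_of_le_of_ne (Int.le_ceil _) hne2
    simp only [hedef]
    exact div_pos (by linarith) hqpos
  have hinfpos : 0 < (Finset.Icc 1 Q).inf' hQne e := by
    rw [Finset.lt_inf'_iff]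
    exact hepos
  have hηpos : 0 < η := by
    rw [hηdef]
    exact lt_min (by linarith) (by linarith)
  refine ⟨η, hηpos, ?_⟩
  intro p q hq1 hcop hlo hhi x
  have hqpos : (0:ℝ) < q := by exact_mod_cast hq1
  have hlo' : (q:ℝ)*τF ≤ p := by
    rw [le_div_iff₀ hqpos] at hlo
    linarith
  have hlt : (q:ℝ)*τF < p := by
    refine lt_of_le_of_ne hlo' (fun hcontra => ?_)
    exact hirr q (-p) (by exact_mod_cast (by omega : ¬ (q:ℤ) = 0)) (by push_cast; linarith)
  have hhi' : (p:ℝ) ≤ (q:ℝ)*τF + (q:ℝ)*η := by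
    rw [div_le_iff₀ hqpos] at hhi
    nlinarith
  have hqQ : Q < q := by
    by_contra hle
    push_neg at hle
    have hqm : q ∈ Finset.Icc 1 Q := Finset.mem_Icc.2 ⟨hq1, hle⟩
    have h1 : η ≤ e q / 2 := by
      refine le_trans (min_le_right _ _) ?_
      have := Finset.inf'_le e hqm
      linarith
    have h3 := hepos q hqm
    have h4 : (q:ℝ)*(e q) = (⌈(q:ℝ)*τF⌉:ℝ) - (q:ℝ)*τF := by
      simp only [hedef]
      field_simp
    have h2 : (q:ℝ)*η < (⌈(q:ℝ)*τF⌉:ℝ) - (q:ℝ)*τF := by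
      have h5 : (q:ℝ)*η ≤ (q:ℝ)*(e q/2) := mul_le_mul_of_nonneg_left h1 hqpos.le
      nlinarith
    have hceil : (⌈(q:ℝ)*τF⌉:ℝ) ≤ p := by
      exact_mod_cast Int.ceil_le.2 hlt.le
    linarith
  have hq2 : (2:ℝ) ≤ (q:ℝ)*c := by
    have h1 : (⌈2/c⌉₊ : ℝ) < q := by
      have : ⌈2/c⌉₊ < q := lt_of_le_of_lt (le_max_right 1 _) hqQ
      exact_mod_cast this
    have h2 : 2/c ≤ (⌈2/c⌉₊ : ℝ) := Nat.le_ceil _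
    rw [div_le_iff₀ hcpos] at h2
    nlinarith
  have hτK : (p:ℝ) + 1 ≤ (q:ℝ) * τ K := by
    have h5 : τF + c ≤ τ K := hcτ
    have h6 : η ≤ c/2 := min_le_left _ _
    have h7 : (q:ℝ) * (τF + c) ≤ (q:ℝ) * τ K := mul_le_mul_of_nonneg_left h5 hqpos.le
    nlinarith
  have hKq : x + (p:ℝ) ≤ (⇑K)^[q] x := by
    by_contra hlt2
    push_neg at hlt2
    have h7 : (K^q : CircleDeg1Lift) x ≤ x + (p:ℝ) := by rw [coe_pow]; exact hlt2.le
    have h8 := translationNumber_le_of_le_add_int (K^q) (x := x) (m := p) h7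
    rw [translationNumber_pow] at h8
    linarith
  have hFq : F^[q] x ≤ x + (p:ℝ) := by
    by_contra hgt
    push_neg at hgt
    have hx1 : ∃ x₁, (f^q : CircleDeg1Lift) x₁ ≤ x₁ + (p:ℝ) := by
      by_contra h'
      push_neg at h'
      have h9 := le_translationNumber_of_add_int_le (f^q) (x := 0) (m := p) (h' 0).le
      rw [translationNumber_pow, hτf] at h9
      linarith
    obtain ⟨x₁, hx1⟩ := hx1
    have hcontq : Continuous (f^q : CircleDeg1Lift) := f.continuous_pow hFc q
    have hb : x + (p:ℝ) ≤ (f^q : CircleDeg1Lift) x := by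
      rw [coe_pow, hfcoe]; exact hgt.le
    obtain ⟨z, hz⟩ := intermediate_value_univ₂ hcontq
      (continuous_id.add continuous_const : Continuous fun y : ℝ => y + (p:ℝ)) hx1 hb
    have : F^[q] z = z + (p:ℝ) := by rw [← hfcoe, ← coe_pow]; exact hz
    exact noper q (by omega) p z this
  have hψ : ContinuousOn (fun t => (fun z => G t (F z))^[q] x - (x + (p:ℝ))) (Icc 0 ε) :=
    (iter_cont F hFc G hGcont ε hε1 x q).sub continuousOn_const
  have hφ0 : (fun t => (fun z => G t (F z))^[q] x - (x + (p:ℝ))) 0 ≤ 0 := by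
    have heq : (fun z => G 0 (F z)) = F := by funext z; rw [hG0]; rfl
    simp only [heq]
    linarith
  have hφε : 0 ≤ (fun t => (fun z => G t (F z))^[q] x - (x + (p:ℝ))) ε := by
    have heq : (fun z => G ε (F z)) = ⇑K := rfl
    simp only [heq]
    linarith
  obtain ⟨t, htmem, ht⟩ := intermediate_value_Icc hε0.le hψ ⟨hφ0, hφε⟩
  have hIter : (fun z => G t (F z))^[q] x = x + (p:ℝ) := by
    have := sub_eq_zero.1 ht
    linarith [this]
  refine ⟨t, htmem, hIter, ?_, ?_⟩
  · -- HasTransNum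
    have htIcc1 : t ∈ Icc (0:ℝ) 1 := ⟨htmem.1, htmem.2.trans hε1⟩
    have hGt := hGlift t htIcc1
    set gt : CircleDeg1Lift := ⟨⟨G t, hGt.2.1.monotone⟩, hGt.2.2.2⟩ with hgtdef
    set Kt : CircleDeg1Lift := gt * f with hKtdef
    have hKtcoe : ⇑Kt = (fun z => G t (F z)) := rfl
    have hKtpow : (Kt^q : CircleDeg1Lift) x = x + (p:ℝ) := by
      rw [coe_pow, hKtcoe]; exact hIter
    have hτKt : τ Kt = (p:ℝ)/(q:ℝ) :=
      translationNumber_of_map_pow_eq_add_int Kt hKtpow (by omega)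
    intro y
    have h8 := Kt.tendsto_translationNumber y
    rw [hτKt] at h8
    simpa only [coe_pow, hKtcoe] using h8
  · intro k hk0 hkq m hper
    have htIcc1 : t ∈ Icc (0:ℝ) 1 := ⟨htmem.1, htmem.2.trans hε1⟩
    have hGt := hGlift t htIcc1
    set gt : CircleDeg1Lift := ⟨⟨G t, hGt.2.1.monotone⟩, hGt.2.2.2⟩ with hgtdef
    set Kt : CircleDeg1Lift := gt * f with hKtdef
    have hKtcoe : ⇑Kt = (fun z => G t (F z)) := rfl
    have hKtpow : (Kt^q : CircleDeg1Lift) x = x + (p:ℝ) := by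
      rw [coe_pow, hKtcoe]; exact hIter
    have hτKt : τ Kt = (p:ℝ)/(q:ℝ) :=
      translationNumber_of_map_pow_eq_add_int Kt hKtpow (by omega)
    have hKtk : (Kt^k : CircleDeg1Lift) x = x + (m:ℝ) := by
      rw [coe_pow, hKtcoe]; exact hper
    have hτ2 : τ Kt = (m:ℝ)/(k:ℝ) :=
      translationNumber_of_map_pow_eq_add_int Kt hKtk hk0
    rw [hτKt] at hτ2
    have hkpos : (0:ℝ) < k := by exact_mod_cast hk0
    have hcross : (p:ℝ)*(k:ℝ) = (m:ℝ)*(q:ℝ) := by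
      field_simp at hτ2
      linarith
    have hcrossZ : p * (k:ℤ) = m * (q:ℤ) := by exact_mod_cast hcross
    have hdvd : (q:ℤ) ∣ p * (k:ℤ) := ⟨m, by rw [hcrossZ]; ring⟩
    have hcop' : IsCoprime (q:ℤ) p := (Int.isCoprime_iff_gcd_eq_one.2 hcop).symm
    have hdvd2 : (q:ℤ) ∣ (k:ℤ) := hcop'.dvd_of_dvd_mul_left hdvd
    have : q ∣ k := by exact_mod_cast hdvd2
    have := Nat.le_of_dvd hk0 this
    omega
end
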